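/- Let G = (V,E,ω) be a finite weighted directed graph whose weighted adjacency matrix M_G = (p_{ij})_{i,j∈V} is row-stochastic (all p_{ij} ≥ 0 and Σ_j p_{ij} = 1 for every i), and let S ⊂ V be a 1-structural set of G with p_{ii} = 0 for all i ∈ V∖S. Then the reduced matrix R_S(G) = R_S(G,1) is row-stochastic: all its entries R_{ij}(G,S,1) are nonnegative and Σ_{j∈S} R_{ij}(G,S,1) = 1 for every i ∈ S. -/

import Mathlib

/-! Common definitions for isospectral graph reductions (Bunimovich–Webb). -/

section IGRDefs

variable {V : Type*} {K : Type*} [Field K]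

/-- A cycle of the graph with edge relation `E`, encoded as the list of its vertices
`(i₀, …, i_p)` with `i₀ = i_p`: length at least 2 (`p ≥ 1`), consecutive pairs are edges,
first vertex equals last vertex, and all vertices are distinct except `i₀ = i_p`. -/
def IsCycleList (E : V → V → Prop) (l : List V) : Prop :=
  2 ≤ l.length ∧ l.Chain' E ∧ l.head? = l.getLast? ∧ l.dropLast.Nodup

/-- `S` is a `lam`-structural set: it is nonempty, every cycle that is not a loop
(i.e. of list-length `> 2`) contains a vertex of `S`, and `ω i i ≠ lam` off `S`. -/
def IsStructural {α : Type*} (E : V → V → Prop) (ω : V → V → α) (lam : α) (S : Set V) :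
    Prop :=
  S.Nonempty ∧ (∀ l, IsCycleList E l → 2 < l.length → ∃ v ∈ l, v ∈ S) ∧
    ∀ i, i ∉ S → ω i i ≠ lam

/-- A branch of `(G,S)` from `i` to `j`, encoded as the list of its vertices
`(i₀, i₁, …, i_p)`: a path (all vertices distinct, except that possibly `i₀ = i_p`)
of length `p ≥ 1` whose interior vertices `i₁, …, i_{p-1}` lie outside `S`. -/
def IsBranchList (E : V → V → Prop) (S : Set V) (i j : V) (l : List V) : Prop :=
  2 ≤ l.length ∧ l.Chain' E ∧ l.head? = some i ∧ l.getLast? = some j ∧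
    l.tail.Nodup ∧ l.dropLast.Nodup ∧ ∀ v ∈ l.tail.dropLast, v ∉ S

/-- The weight `ω(β,λ) = ω(i₀,i₁) ∏_{ℓ=1}^{p-1} ω(i_ℓ,i_{ℓ+1})/(λ - ω(i_ℓ,i_ℓ))`
of a branch `β = (i₀,…,i_p)`. -/
noncomputable def branchWeight (ω : V → V → K) (lam : K) : List V → K
  | [] => 0
  | [_] => 0
  | [i, j] => ω i j
  | i :: j :: k :: t => ω i j * branchWeight ω lam (j :: k :: t) / (lam - ω j j)

/-- The entry `R_{ij}(G,S,λ) = Σ_{β ∈ B_{ij}} ω(β,λ)` of the (extended) reduced matrix. -/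
noncomputable def Rentry (E : V → V → Prop) (S : Set V) (ω : V → V → K) (lam : K)
    (i j : V) : K :=
  ∑ᶠ l ∈ {l : List V | IsBranchList E S i j l}, branchWeight ω lam l

/-- `R^{(p)}_{ij}(G,S,λ)`: the sum of weights of branches of length `p` from `i` to `j`. -/
noncomputable def RentryN (E : V → V → Prop) (S : Set V) (ω : V → V → K) (lam : K)
    (p : ℕ) (i j : V) : K :=
  ∑ᶠ l ∈ {l : List V | IsBranchList E S i j l ∧ l.length = p + 1}, branchWeight ω lam l

/-- `Sk E S k` is the set of vertices of depth `≤ k`: `S₀ = S` and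
`S_{k+1} = S_k ∪ {i | every edge from i ends in S_k}`. -/
def Sk (E : V → V → Prop) (S : Set V) : ℕ → Set V
  | 0 => S
  | k + 1 => Sk E S k ∪ {i | ∀ j, E i j → j ∈ Sk E S k}

end IGRDefs
section Aux

open Relation

variable {V : Type*}

/-- Conversion of a finsum over a finite set to a `Finset` sum. -/
lemma finsum_mem_finite' {α M : Type*} [AddCommMonoid M] {s : Set α} (hs : s.Finite)
    (g : α → M) : ∑ᶠ x ∈ s, g x = ∑ x ∈ hs.toFinset, g x := by
  conv_lhs => rw [← hs.coe_toFinset]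
  rw [finsum_mem_coe_finset]

lemma exists_dup_split {α : Type*} : ∀ {l : List α}, ¬ l.Nodup →
    ∃ (a : α) (l₁ l₂ l₃ : List α), l = l₁ ++ a :: l₂ ++ a :: l₃ := by
  intro l
  induction l with
  | nil => intro h; exact absurd List.nodup_nil h
  | cons x xs ih =>
    intro h
    rw [List.nodup_cons] at h
    by_cases hx : x ∈ xs
    · obtain ⟨s, t, rfl⟩ := List.append_of_mem hx
      exact ⟨x, [], s, t, by simp⟩
    · have hxs : ¬ xs.Nodup := fun hn => h ⟨hx, hn⟩
      obtain ⟨a, l₁, l₂, l₃, rfl⟩ := ih hxs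
      exact ⟨a, x :: l₁, l₂, l₃, by simp⟩

/-- There is no closed walk avoiding `S` whose edges all have nonzero weight. -/
lemma no_closed_walk {E : V → V → Prop} {ω : V → V → ℝ} {S : Set V}
    (hω : ∀ i j, ¬ E i j → ω i j = 0) (hstr : IsStructural E ω 1 S)
    (hdiag : ∀ i, i ∉ S → ω i i = 0) :
    ∀ (n : ℕ) (l : List V), l.length ≤ n → 2 ≤ l.length →
      l.Chain' (fun a b => ω a b ≠ 0) → l.head? = l.getLast? →
      (∀ v ∈ l, v ∉ S) → False := by
  intro n
  induction n with
  | zero => intro l h1 h2 _ _ _; omega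
  | succ n ih =>
    intro l hlen h2 hch hhl hS
    by_cases hnd : l.dropLast.Nodup
    · have hcyc : IsCycleList E l :=
        ⟨h2, hch.imp (fun {a b} hab => by_contra fun hE => hab (hω _ _ hE)), hhl, hnd⟩
      rcases lt_or_eq_of_le h2 with h3 | h2'
      · obtain ⟨v, hv, hvS⟩ := hstr.2.1 l hcyc h3
        exact hS v hv hvS
      · obtain ⟨a, b, rfl⟩ := List.length_eq_two.mp h2'.symm
        have hab : a = b := by simpa using hhl
        subst hab
        rw [List.Chain', List.isChain_pair] at hch
        exact hch (hdiag a (hS a (by simp)))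
    · obtain ⟨a, l₁, l₂, l₃, hdec⟩ := exists_dup_split hnd
      have hne : l ≠ [] := by intro h; subst h; simp at h2
      have hl : l = l.dropLast ++ [l.getLast hne] := (List.dropLast_append_getLast hne).symm
      have hinfix : (a :: l₂ ++ [a]) <:+: l := by
        refine ⟨l₁, l₃ ++ [l.getLast hne], ?_⟩
        conv_rhs => rw [hl, hdec]
        simp
      have hchain : (a :: l₂ ++ [a]).Chain' (fun a b => ω a b ≠ 0) := hch.infix hinfix
      have hlenl : l.length = l₁.length + l₂.length + l₃.length + 3 := by
        have h1 : l.dropLast.length = l.length - 1 := by simp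
        rw [hdec] at h1
        simp at h1
        omega
      have hlc : (a :: l₂ ++ [a]).length = l₂.length + 2 := by simp
      refine ih (a :: l₂ ++ [a]) (by omega) (by simp) hchain ?_ ?_
      · have : (a :: l₂ ++ [a]).getLast? = some a := by
          rw [show a :: l₂ ++ [a] = (a :: l₂) ++ [a] by simp, List.getLast?_concat]
        rw [this]; rfl
      · intro v hv
        exact hS v (hinfix.sublist.mem hv)

lemma bw_nonneg {ω : V → V → ℝ} (hnn : ∀ a b, 0 ≤ ω a b) :
    ∀ l : List V, (∀ v ∈ l.tail.dropLast, ω v v = 0) → 0 ≤ branchWeight ω 1 l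
  | [], _ => le_of_eq (by simp [branchWeight])
  | [_], _ => le_of_eq (by simp [branchWeight])
  | [a, b], _ => by simpa [branchWeight] using hnn a b
  | a :: b :: c :: t, h => by
      have hb : ω b b = 0 := h b (by simp)
      have ih := bw_nonneg hnn (b :: c :: t)
        (fun v hv => h v (by
          simp only [List.tail_cons] at hv ⊢
          rw [show (b :: c :: t).dropLast = b :: (c :: t).dropLast from rfl]
          exact List.mem_cons_of_mem _ hv))
      rw [show branchWeight ω 1 (a :: b :: c :: t)
          = ω a b * branchWeight ω 1 (b :: c :: t) / (1 - ω b b) from rfl, hb, sub_zero, div_one]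
      exact mul_nonneg (hnn a b) ih

lemma bw_chain {ω : V → V → ℝ} :
    ∀ l : List V, branchWeight ω 1 l ≠ 0 → l.Chain' (fun a b => ω a b ≠ 0)
  | [], h => (h (by simp [branchWeight])).elim
  | [_], h => (h (by simp [branchWeight])).elim
  | [a, b], h => by
      rw [List.Chain', List.isChain_pair]
      simpa [branchWeight] using h
  | a :: b :: c :: t, h => by
      rw [show branchWeight ω 1 (a :: b :: c :: t)
          = ω a b * branchWeight ω 1 (b :: c :: t) / (1 - ω b b) from rfl] at h
      have h1 : ω a b ≠ 0 := fun h0 => h (by rw [h0, zero_mul, zero_div])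
      have h2 : branchWeight ω 1 (b :: c :: t) ≠ 0 := fun h0 => h (by rw [h0, mul_zero, zero_div])
      exact List.isChain_cons_cons.mpr ⟨h1, bw_chain _ h2⟩

lemma bw_cons {ω : V → V → ℝ} (a k x : V) (m : List V) (hk : ω k k = 0) :
    branchWeight ω 1 (a :: k :: x :: m) = ω a k * branchWeight ω 1 (k :: x :: m) := by
  rw [show branchWeight ω 1 (a :: k :: x :: m)
      = ω a k * branchWeight ω 1 (k :: x :: m) / (1 - ω k k) from rfl, hk, sub_zero, div_one]

lemma branch_finite [Fintype V] {E : V → V → Prop} {S : Set V} (i j : V) :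
    {l : List V | IsBranchList E S i j l}.Finite := by
  apply (List.finite_length_le V (Fintype.card V + 1)).subset
  intro l hl
  have h1 : l.tail.Nodup := hl.2.2.2.2.1
  have h2 := h1.length_le_card
  have h3 : l.tail.length = l.length - 1 := List.length_tail
  have h4 : 2 ≤ l.length := hl.1
  simp only [Set.mem_setOf_eq]
  omega

lemma branch_pair {E : V → V → Prop} {S : Set V} {i j : V} (hE : E i j) :
    IsBranchList E S i j [i, j] :=
  ⟨by simp, List.isChain_pair.mpr hE, rfl, rfl, by simp, by simp, by simp⟩

lemma head_not_mem {S : Set V} {k j : V} {m : List V} (hk : k ∉ S) (hj : j ∈ S) (hm : m ≠ [])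
    (hlast : (k :: m).getLast? = some j)
    (hdl : (k :: m).dropLast.Nodup)
    (_hint : ∀ v ∈ m.dropLast, v ∉ S) : k ∉ m := by
  intro hkm
  have hj' : m.getLast hm = j := by
    rw [List.getLast?_eq_getLast (by simp)] at hlast
    have := Option.some.inj hlast
    rwa [List.getLast_cons hm] at this
  have hkm' : k ∈ m.dropLast ++ [m.getLast hm] := by
    rw [List.dropLast_append_getLast hm]; exact hkm
  rcases List.mem_append.mp hkm' with h | h
  · rw [List.dropLast_cons_of_ne_nil hm, List.nodup_cons] at hdl
    exact hdl.1 h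
  · have : k = j := by rw [List.mem_singleton.mp h, hj']
    exact hk (this ▸ hj)

lemma branch_cons_iff {E : V → V → Prop} {S : Set V} {i j k : V} {m : List V}
    (hj : j ∈ S) (hk : k ∉ S) :
    IsBranchList E S i j (i :: k :: m) ↔
      E i k ∧ i ∉ (k :: m).dropLast ∧ IsBranchList E S k j (k :: m) := by
  cases m with
  | nil =>
    constructor
    · rintro ⟨-, -, -, hlast, -, -, -⟩
      have hkj : k = j := by simpa using hlast
      exact absurd hj (hkj ▸ hk)
    · rintro ⟨-, -, h2, -⟩
      simp at h2
  | cons a m' =>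
    have hd1 : (k :: a :: m').dropLast = k :: (a :: m').dropLast := rfl
    constructor
    · rintro ⟨-, hch, -, hlast, htl, hdl, hint⟩
      rw [List.Chain', List.isChain_cons_cons] at hch
      rw [show (i :: k :: a :: m').dropLast = i :: (k :: a :: m').dropLast from rfl,
        List.nodup_cons] at hdl
      refine ⟨hch.1, hdl.1, by simp, hch.2, rfl, by simpa using hlast, ?_, hdl.2, ?_⟩
      · simp only [List.tail_cons] at htl ⊢
        exact (List.nodup_cons.mp htl).2
      · intro v hv
        refine hint v ?_
        simp only [List.tail_cons] at hv ⊢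
        rw [hd1]
        exact List.mem_cons_of_mem _ hv
    · rintro ⟨hEik, hnotin, -, hch', -, hlast', htl', hdl', hint'⟩
      simp only [List.tail_cons] at htl' hint'
      have hknm : k ∉ (a :: m') := head_not_mem hk hj (by simp) hlast' hdl' hint'
      refine ⟨by simp, List.isChain_cons_cons.mpr ⟨hEik, hch'⟩, rfl, by simpa using hlast', ?_, ?_, ?_⟩
      · simp only [List.tail_cons]
        exact List.nodup_cons.mpr ⟨hknm, htl'⟩
      · rw [show (i :: k :: a :: m').dropLast = i :: (k :: a :: m').dropLast from rfl,
          List.nodup_cons]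
        exact ⟨hnotin, hdl'⟩
      · intro v hv
        simp only [List.tail_cons] at hv
        rw [hd1] at hv
        rcases List.mem_cons.mp hv with rfl | hv'
        · exact hk
        · exact hint' v hv'

lemma branch_dropLast_offS {E : V → V → Prop} {S : Set V} {k j : V} {l' : List V}
    (hk : k ∉ S) (hb : IsBranchList E S k j l') : ∀ v ∈ l'.dropLast, v ∉ S := by
  obtain ⟨h2, -, hhd, -, -, -, hint⟩ := hb
  cases l' with
  | nil => simp at h2
  | cons x m =>
    have hx : x = k := by simpa using hhd
    subst hx
    cases m with
    | nil => simp at h2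
    | cons a m' =>
      intro v hv
      rw [List.dropLast_cons_of_ne_nil (by simp : (a :: m') ≠ [])] at hv
      rcases List.mem_cons.mp hv with rfl | hv'
      · exact hk
      · exact hint v (by simpa using hv')

end Aux
section Aux2

variable {V : Type*} [Fintype V]

lemma sum_T_eq {E : V → V → Prop} {ω : V → V → ℝ} {S : Set V}
    (hω : ∀ i j, ¬ E i j → ω i j = 0) (hstr : IsStructural E ω 1 S)
    (hdiag : ∀ v, v ∉ S → ω v v = 0) {i k j : V} (hk : k ∉ S) (hj : j ∈ S)
    (hik : ω i k ≠ 0) :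
    ∑ᶠ l' ∈ {l' : List V | IsBranchList E S k j l' ∧ i ∉ l'.dropLast ∧ E i k},
      branchWeight ω 1 l' = Rentry E S ω 1 k j := by
  unfold Rentry
  apply finsum_mem_inter_support_eq
  ext l'
  simp only [Set.mem_inter_iff, Set.mem_setOf_eq, Function.mem_support]
  constructor
  · rintro ⟨⟨hb, -, -⟩, hW⟩; exact ⟨hb, hW⟩
  · rintro ⟨hb, hW⟩
    have hEik : E i k := by
      by_contra hE
      exact hik (hω _ _ hE)
    refine ⟨⟨hb, ?_, hEik⟩, hW⟩
    intro hmem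
    have hoffS : ∀ v ∈ l'.dropLast, v ∉ S := branch_dropLast_offS hk hb
    have hiS : i ∉ S := hoffS i hmem
    obtain ⟨s, t, hst⟩ := List.append_of_mem hmem
    have hchain' : l'.Chain' (fun a b => ω a b ≠ 0) := bw_chain l' hW
    have hhd : l'.head? = some k := hb.2.2.1
    have hne : l' ≠ [] := by
      intro h
      rw [h] at hhd
      simp at hhd
    have hld : l' = l'.dropLast ++ [l'.getLast hne] := (List.dropLast_append_getLast hne).symm
    have hdlne : l'.dropLast ≠ [] := by
      intro h
      rw [h] at hst
      exact absurd hst (by simp)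
    have hhd2 : l'.dropLast.head? = some k := by
      rw [← List.head?_append_of_ne_nil l'.dropLast (l₂ := [l'.getLast hne]) hdlne, ← hld, hhd]
    cases s with
    | nil =>
      have hik' : i = k := by
        rw [hst] at hhd2
        simpa using hhd2
      rw [← hik'] at hik
      exact hik (hdiag i hiS)
    | cons x s' =>
      have hx : x = k := by
        rw [hst] at hhd2
        simpa using hhd2
      have hpre : ((x :: s') ++ [i]) <+: l'.dropLast := by
        rw [hst]
        exact ⟨t, by simp⟩
      have hchainc : ((x :: s') ++ [i]).Chain' (fun a b => ω a b ≠ 0) :=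
        hchain'.infix (hpre.trans (List.dropLast_prefix l')).isInfix
      have hchain2 : (i :: ((x :: s') ++ [i])).Chain' (fun a b => ω a b ≠ 0) := by
        rw [List.Chain', List.isChain_cons]
        refine ⟨fun y hy => ?_, hchainc⟩
        simp only [List.cons_append, List.head?_cons, Option.mem_def, Option.some.injEq] at hy
        rw [← hy, hx]
        exact hik
      refine no_closed_walk hω hstr hdiag (i :: ((x :: s') ++ [i])).length
        (i :: ((x :: s') ++ [i])) le_rfl (by simp) hchain2 ?_ ?_
      · rw [show (i :: ((x :: s') ++ [i])) = (i :: x :: s') ++ [i] by simp,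
          List.getLast?_concat]
        rfl
      · intro v hv
        rcases List.mem_cons.mp hv with rfl | hv'
        · exact hiS
        rcases List.mem_append.mp hv' with h | h
        · exact hoffS v (by rw [hst]; exact List.mem_append_left _ h)
        · rw [List.mem_singleton.mp h]
          exact hiS

lemma key_recur {E : V → V → Prop} {ω : V → V → ℝ} {S : Set V}
    (hω : ∀ i j, ¬ E i j → ω i j = 0) (hstr : IsStructural E ω 1 S)
    (hdiag : ∀ v, v ∉ S → ω v v = 0) (i j : V) (hj : j ∈ S) :
    Rentry E S ω 1 i j = ω i j + ∑ᶠ k ∈ (Sᶜ : Set V), ω i k * Rentry E S ω 1 k j := by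
  classical
  have Bfin : ∀ a b : V, {l : List V | IsBranchList E S a b l}.Finite :=
    fun a b => branch_finite a b
  have Tfin : ∀ k : V,
      {l' : List V | IsBranchList E S k j l' ∧ i ∉ l'.dropLast ∧ E i k}.Finite :=
    fun k => (Bfin k j).subset (fun l' h => h.1)
  have hsplit : {l : List V | IsBranchList E S i j l}
      = {l | IsBranchList E S i j l ∧ l.length = 2}
        ∪ {l | IsBranchList E S i j l ∧ 3 ≤ l.length} := by
    ext l
    simp only [Set.mem_setOf_eq, Set.mem_union]
    constructor
    · intro h
      have h2 := h.1
      by_cases hl : l.length = 2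
      · exact Or.inl ⟨h, hl⟩
      · exact Or.inr ⟨h, by omega⟩
    · rintro (⟨h, -⟩ | ⟨h, -⟩) <;> exact h
  have hA2 : (∑ᶠ l ∈ {l : List V | IsBranchList E S i j l ∧ l.length = 2},
      branchWeight ω 1 l) = ω i j := by
    by_cases hE : E i j
    · have hset : {l : List V | IsBranchList E S i j l ∧ l.length = 2} = {[i, j]} := by
        ext l
        simp only [Set.mem_setOf_eq, Set.mem_singleton_iff]
        constructor
        · rintro ⟨hb, h2⟩
          obtain ⟨a, b, rfl⟩ := List.length_eq_two.mp h2
          obtain ⟨-, -, hhd, hlast, -⟩ := hb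
          have ha : a = i := by simpa using hhd
          have hb' : b = j := by simpa using hlast
          rw [ha, hb']
        · rintro rfl
          exact ⟨branch_pair hE, rfl⟩
      rw [hset, finsum_mem_singleton]
      rfl
    · have hset : {l : List V | IsBranchList E S i j l ∧ l.length = 2} = (∅ : Set (List V)) := by
        ext l
        simp only [Set.mem_setOf_eq, Set.mem_empty_iff_false, iff_false, not_and]
        intro hb h2
        obtain ⟨a, b, rfl⟩ := List.length_eq_two.mp h2
        obtain ⟨-, hch, hhd, hlast, -⟩ := hb
        have ha : a = i := by simpa using hhd
        have hb' : b = j := by simpa using hlast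
        rw [List.Chain', List.isChain_pair] at hch
        exact hE (ha ▸ hb' ▸ hch)
      rw [hset, finsum_mem_empty, hω i j hE]
  have hA3set : {l : List V | IsBranchList E S i j l ∧ 3 ≤ l.length}
      = ⋃ k ∈ (Sᶜ : Set V), (fun l' => i :: l') ''
          {l' : List V | IsBranchList E S k j l' ∧ i ∉ l'.dropLast ∧ E i k} := by
    ext l
    simp only [Set.mem_setOf_eq, Set.mem_iUnion, Set.mem_image, Set.mem_compl_iff,
      exists_prop]
    constructor
    · rintro ⟨hb, h3⟩
      obtain ⟨x, t, rfl⟩ : ∃ x t, l = x :: t := by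
        cases l with
        | nil => simp at h3
        | cons x t => exact ⟨x, t, rfl⟩
      have hx : x = i := by simpa using hb.2.2.1
      subst hx
      obtain ⟨k, m, rfl⟩ : ∃ k m, t = k :: m := by
        cases t with
        | nil => simp at h3
        | cons k m => exact ⟨k, m, rfl⟩
      have hm : m ≠ [] := by
        intro h
        rw [h] at h3
        simp at h3
      have hk : k ∉ S := by
        apply hb.2.2.2.2.2.2 k
        simp only [List.tail_cons]
        rw [List.dropLast_cons_of_ne_nil hm]
        exact List.mem_cons_self
      rw [branch_cons_iff hj hk] at hb
      exact ⟨k, hk, k :: m, ⟨hb.2.2, hb.2.1, hb.1⟩, rfl⟩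
    · rintro ⟨k, hk, l', ⟨hb', hni, hEik⟩, rfl⟩
      obtain ⟨x, m, rfl⟩ : ∃ x m, l' = x :: m := by
        have h2 := hb'.1
        cases l' with
        | nil => simp at h2
        | cons x m => exact ⟨x, m, rfl⟩
      have hx : x = k := by simpa using hb'.2.2.1
      subst hx
      refine ⟨(branch_cons_iff hj hk).mpr ⟨hEik, hni, hb'⟩, ?_⟩
      have h2 := hb'.1
      simp only [List.length_cons] at h2 ⊢
      omega
  have hdisj : (Sᶜ : Set V).PairwiseDisjoint (fun k => (fun l' : List V => i :: l') ''
      {l' : List V | IsBranchList E S k j l' ∧ i ∉ l'.dropLast ∧ E i k}) := by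
    intro k₁ h₁ k₂ h₂ hne
    refine Set.disjoint_left.mpr ?_
    rintro l ⟨l₁, hl₁, rfl⟩ ⟨l₂, hl₂, heq⟩
    apply hne
    have e₁ : l₁.head? = some k₁ := hl₁.1.2.2.1
    have e₂ : l₂.head? = some k₂ := hl₂.1.2.2.1
    have hl : l₂ = l₁ := by injection heq
    rw [hl, e₁] at e₂
    exact Option.some.inj e₂
  unfold Rentry
  rw [hsplit, finsum_mem_union ?_ ?_ ?_]
  · rw [hA2, hA3set, finsum_mem_biUnion hdisj (Set.toFinite _) (fun k _ => (Tfin k).image _)]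
    congr 1
    apply finsum_mem_congr rfl
    intro k hk
    have hkS : k ∉ S := hk
    rw [finsum_mem_image (by intro a _ b _ h; injection h)]
    have hstep : ∀ l' ∈ {l' : List V | IsBranchList E S k j l' ∧ i ∉ l'.dropLast ∧ E i k},
        branchWeight ω 1 (i :: l') = ω i k * branchWeight ω 1 l' := by
      intro l' hl'
      obtain ⟨hb', -, -⟩ := hl'
      obtain ⟨x, m, rfl⟩ : ∃ x m, l' = x :: m := by
        have h2 := hb'.1
        cases l' with
        | nil => simp at h2
        | cons x m => exact ⟨x, m, rfl⟩
      have hx : x = k := by simpa using hb'.2.2.1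
      cases m with
      | nil =>
        have h2 := hb'.1
        simp at h2
      | cons a m' =>
        rw [bw_cons i x a m' (by rw [hx]; exact hdiag k hkS), hx]
    rw [finsum_mem_congr rfl hstep, finsum_mem_finite' (Tfin k), ← Finset.mul_sum,
      ← finsum_mem_finite' (Tfin k)]
    by_cases h0 : ω i k = 0
    · rw [h0, zero_mul, zero_mul]
    · rw [sum_T_eq hω hstr hdiag hkS hj h0]
      rfl
  · refine Set.disjoint_left.mpr ?_
    rintro l ⟨-, h2⟩ ⟨-, h3⟩
    omega
  · exact (Bfin i j).subset (fun l h => h.1)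
  · exact (Bfin i j).subset (fun l h => h.1)

lemma transgen_walk {ω : V → V → ℝ} {S : Set V} {a b : V}
    (h : Relation.TransGen (fun k i => k ∉ S ∧ ω i k ≠ 0) a b) :
    ∃ l : List V, 2 ≤ l.length ∧ l.Chain' (fun x y => ω x y ≠ 0) ∧
      l.head? = some b ∧ l.getLast? = some a ∧ ∀ v ∈ l.tail, v ∉ S := by
  induction h with
  | @single c hr =>
    refine ⟨[c, a], by simp, List.isChain_pair.mpr hr.2, rfl, by simp, ?_⟩
    intro v hv
    simp only [List.tail_cons, List.mem_singleton] at hv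
    rw [hv]
    exact hr.1
  | @tail b c hab hbc ih =>
    obtain ⟨l, h2, hch, hhd, hlast, htail⟩ := ih
    obtain ⟨x, t, rfl⟩ : ∃ x t, l = x :: t := by
      cases l with
      | nil => simp at h2
      | cons x t => exact ⟨x, t, rfl⟩
    have hx : x = b := by simpa using hhd
    refine ⟨c :: x :: t, by simp, ?_, rfl, ?_, ?_⟩
    · rw [List.Chain', List.isChain_cons_cons]
      refine ⟨?_, hch⟩
      rw [hx]
      exact hbc.2
    · rw [List.getLast?_cons_cons]
      exact hlast
    · intro v hv
      simp only [List.tail_cons] at hv ⊢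
      rcases List.mem_cons.mp hv with rfl | hv'
      · rw [hx]
        exact hbc.1
      · exact htail v (by simpa using hv')

lemma wf_r {E : V → V → Prop} {ω : V → V → ℝ} {S : Set V}
    (hω : ∀ i j, ¬ E i j → ω i j = 0) (hstr : IsStructural E ω 1 S)
    (hdiag : ∀ v, v ∉ S → ω v v = 0) :
    WellFounded (fun k i : V => k ∉ S ∧ ω i k ≠ 0) := by
  have hirr : ∀ a : V, ¬ Relation.TransGen (fun k i : V => k ∉ S ∧ ω i k ≠ 0) a a := by
    intro a hta
    obtain ⟨l, h2, hch, hhd, hlast, htail⟩ := transgen_walk hta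
    have hmem : ∀ v ∈ l, v ∉ S := by
      obtain ⟨x, t, rfl⟩ : ∃ x t, l = x :: t := by
        cases l with
        | nil => simp at h2
        | cons x t => exact ⟨x, t, rfl⟩
      have hx : x = a := by simpa using hhd
      have ht : t ≠ [] := by
        intro h
        rw [h] at h2
        simp at h2
      have ha : a ∈ t := by
        rw [List.getLast?_eq_getLast (l := x :: t) (by simp)] at hlast
        have hgl := Option.some.inj hlast
        rw [List.getLast_cons ht] at hgl
        rw [← hgl]
        exact List.getLast_mem ht
      intro v hv
      rcases List.mem_cons.mp hv with rfl | hv'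
      · rw [hx]
        exact htail a (by simpa using ha)
      · exact htail v (by simpa using hv')
    exact no_closed_walk hω hstr hdiag l.length l le_rfl h2 hch (hhd.trans hlast.symm) hmem
  haveI : IsTrans V (Relation.TransGen fun k i : V => k ∉ S ∧ ω i k ≠ 0) :=
    ⟨fun _ _ _ h1 h2 => h1.trans h2⟩
  haveI : IsIrrefl V (Relation.TransGen fun k i : V => k ∉ S ∧ ω i k ≠ 0) := ⟨hirr⟩
  have hwf := Finite.wellFounded_of_trans_of_irrefl
    (Relation.TransGen fun k i : V => k ∉ S ∧ ω i k ≠ 0)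
  have hsub : Subrelation (fun k i : V => k ∉ S ∧ ω i k ≠ 0)
      (Relation.TransGen fun k i : V => k ∉ S ∧ ω i k ≠ 0) :=
    fun {a b} h => Relation.TransGen.single h
  exact hsub.wf hwf

end Aux2

/-- If `M_G` is row-stochastic and `S` is a `1`-structural set with zero
diagonal weights off `S`, then the reduced matrix `R_S(G) = R_S(G,1)` is row-stochastic:
its entries are nonnegative and each of its rows sums to `1`. -/
theorem reduced_matrix_row_stochastic
    {V : Type*} [Fintype V]
    (E : V → V → Prop) (ω : V → V → ℝ)
    (hω : ∀ i j, ¬ E i j → ω i j = 0)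
    (hnonneg : ∀ i j, 0 ≤ ω i j)
    (hrow : ∀ i, ∑ j, ω i j = 1)
    (S : Set V) (hstr : IsStructural E ω 1 S)
    (hdiag : ∀ i, i ∉ S → ω i i = 0) :
    (∀ i ∈ S, ∀ j ∈ S, 0 ≤ Rentry E S ω 1 i j) ∧
      ∀ i ∈ S, (∑ᶠ j ∈ S, Rentry E S ω 1 i j) = 1 := by
  classical
  have Bfin : ∀ a b : V, {l : List V | IsBranchList E S a b l}.Finite :=
    fun a b => branch_finite a b
  have hnn : ∀ a b : V, 0 ≤ Rentry E S ω 1 a b := by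
    intro a b
    unfold Rentry
    rw [finsum_mem_finite' (Bfin a b)]
    apply Finset.sum_nonneg
    intro l hl
    rw [Set.Finite.mem_toFinset] at hl
    exact bw_nonneg hnonneg l (fun v hv => hdiag v (hl.2.2.2.2.2.2 v hv))
  refine ⟨fun i _ j _ => hnn i j, ?_⟩
  have hSf : S.Finite := Set.toFinite S
  have hScf : (Sᶜ : Set V).Finite := Set.toFinite _
  set H : V → ℝ := fun i => ∑ᶠ j ∈ S, Rentry E S ω 1 i j with hHdef
  have hrec : ∀ i, H i = (∑ j ∈ hSf.toFinset, ω i j) + ∑ k ∈ hScf.toFinset, ω i k * H k := by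
    intro i
    have hHi : H i = ∑ᶠ j ∈ S, Rentry E S ω 1 i j := rfl
    rw [hHi, finsum_mem_finite' hSf]
    have hpt : ∀ j ∈ hSf.toFinset, Rentry E S ω 1 i j
        = ω i j + ∑ k ∈ hScf.toFinset, ω i k * Rentry E S ω 1 k j := by
      intro j hjf
      rw [key_recur hω hstr hdiag i j (hSf.mem_toFinset.mp hjf), finsum_mem_finite' hScf]
    rw [Finset.sum_congr rfl hpt, Finset.sum_add_distrib]
    congr 1
    rw [Finset.sum_comm]
    apply Finset.sum_congr rfl
    intro k _
    rw [← Finset.mul_sum, ← finsum_mem_finite' hSf]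
  have hwf := wf_r (E := E) hω hstr hdiag
  have hone : ∀ i, H i = 1 := by
    intro i
    refine hwf.induction (C := fun v => H v = 1) i ?_
    intro x ih
    rw [hrec x]
    have hsum2 : ∑ k ∈ hScf.toFinset, ω x k * H k = ∑ k ∈ hScf.toFinset, ω x k := by
      apply Finset.sum_congr rfl
      intro k hkf
      by_cases h0 : ω x k = 0
      · rw [h0, zero_mul]
      · rw [ih k ⟨by simpa using hScf.mem_toFinset.mp hkf, h0⟩, mul_one]
    rw [hsum2]
    have hcompl : hScf.toFinset = hSf.toFinsetᶜ := Set.Finite.toFinset_compl hSf hScf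
    rw [hcompl, Finset.sum_add_sum_compl]
    exact hrow x
  intro i _
  exact hone i
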